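/- Let Γ and K be finite graphs with Υ_sym(K,Γ) = |V(K)| · Υ(K,Γ), and let M ⊆ V(Γ) be a set with |M| = Υ(K,Γ) meeting every subgraph of Γ isomorphic to K. Then for every Aut(Γ)-orbit V of vertices: if some subgraph of Γ isomorphic to K has a vertex in V, then |V ∩ M| / |V| = 1/|V(K)|; otherwise |V ∩ M| / |V| = 0. -/

import Mathlib

/-- `X` meets every subgraph of `Γ` isomorphic to `K`. -/
def KCover {W V : Type} (K : SimpleGraph W) (Γ : SimpleGraph V) (X : Set V) : Prop :=
  ∀ f : K →g Γ, Function.Injective f → ∃ w : W, f w ∈ X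

/-- `X` is invariant under all automorphisms of `Γ`. -/
def AutInvariant {V : Type} (Γ : SimpleGraph V) (X : Set V) : Prop :=
  ∀ g : Γ ≃g Γ, (fun v => g v) '' X = X

/-- The vertex representativity `Υ(K, Γ)`. -/
noncomputable def upsilon {W V : Type} (K : SimpleGraph W) (Γ : SimpleGraph V) : ℕ :=
  sInf {m | ∃ X : Set V, X.Finite ∧ Nat.card X = m ∧ KCover K Γ X}

/-- The symmetric vertex representativity `Υ_sym(K, Γ)`. -/
noncomputable def upsilonSym {W V : Type} (K : SimpleGraph W) (Γ : SimpleGraph V) : ℕ :=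
  sInf {m | ∃ X : Set V, X.Finite ∧ Nat.card X = m ∧ AutInvariant Γ X ∧ KCover K Γ X}

/-- The `Aut Γ`-orbit of a vertex. -/
def autOrbit {V : Type} (Γ : SimpleGraph V) (v : V) : Set V :=
  {w | ∃ g : Γ ≃g Γ, g v = w}

open MulAction

/-- The automorphism group of `Γ` as a subgroup of `Equiv.Perm V`. -/
def autSub {V : Type} (Γ : SimpleGraph V) : Subgroup (Equiv.Perm V) where
  carrier := {g | ∀ a b : V, Γ.Adj (g a) (g b) ↔ Γ.Adj a b}
  one_mem' := fun a b => Iff.rfl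
  mul_mem' := fun {g h} hg hh a b => by
    simp only [Equiv.Perm.mul_apply]; rw [hg, hh]
  inv_mem' := fun {g} hg a b => by
    have := (hg (g⁻¹ a) (g⁻¹ b)).symm
    simpa using this

def autSub.toIso {V : Type} {Γ : SimpleGraph V} (g : autSub Γ) : Γ ≃g Γ :=
  { toEquiv := g.1, map_rel_iff' := fun {a b} => g.2 a b }

def isoToAut {V : Type} {Γ : SimpleGraph V} (g : Γ ≃g Γ) : autSub Γ :=
  ⟨g.toEquiv, fun a b => g.map_rel_iff⟩

lemma isoToAut_smul {V : Type} {Γ : SimpleGraph V} (g : Γ ≃g Γ) (x : V) :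
    (isoToAut g) • x = g x := rfl

lemma autSub_smul {V : Type} {Γ : SimpleGraph V} (g : autSub Γ) (x : V) :
    g • x = g.1 x := rfl

lemma autOrbit_eq_orbit {V : Type} (Γ : SimpleGraph V) (v : V) :
    autOrbit Γ v = orbit (autSub Γ) v := by
  ext w
  constructor
  · rintro ⟨g, rfl⟩
    exact ⟨isoToAut g, rfl⟩
  · rintro ⟨g, rfl⟩
    exact ⟨autSub.toIso g, rfl⟩

lemma count_aux {G α : Type} [Group G] [MulAction G α] (M : Set α) (x : α) :
    Nat.card {g : G // g • x ∈ M} * Nat.card (orbit G x) =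
      Nat.card ↥(M ∩ orbit G x) * Nat.card G := by
  classical
  have hsel : ∀ m : ↥(M ∩ orbit G x), ∃ g : G, g • x = (m : α) := fun m => m.2.2
  choose sel hsel using hsel
  have e : {g : G // g • x ∈ M} ≃ ↥(M ∩ orbit G x) × stabilizer G x :=
  { toFun := fun g =>
      (⟨g.1 • x, g.2, ⟨g.1, rfl⟩⟩,
       ⟨(sel ⟨g.1 • x, g.2, ⟨g.1, rfl⟩⟩)⁻¹ * g.1, by
          rw [mem_stabilizer_iff, mul_smul, inv_smul_eq_iff, hsel]⟩)
    invFun := fun p =>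
      ⟨sel p.1 * p.2.1, by
        have h2 : p.2.1 • x = x := p.2.2
        rw [mul_smul, h2, hsel]
        exact p.1.2.1⟩
    left_inv := fun g => by
      apply Subtype.ext
      simp
    right_inv := fun p => by
      rcases p with ⟨m, s⟩
      have hx : (sel m * s.1) • x = (m : α) := by
        have h2 : s.1 • x = x := s.2
        rw [mul_smul, h2, hsel]
      have hm : (⟨(sel m * s.1) • x, by rw [hx]; exact m.2.1, ⟨_, rfl⟩⟩ : ↥(M ∩ orbit G x)) = m :=
        Subtype.ext hx
      refine Prod.ext hm ?_
      apply Subtype.ext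
      simp only [hm]
      group }
  rw [Nat.card_congr e, Nat.card_prod,
    ← Nat.card_congr (orbitProdStabilizerEquivGroup G x), Nat.card_prod]
  ring

/-- The density of `M` on the orbit of `x`. -/
noncomputable def dens {V : Type} (Γ : SimpleGraph V) (M : Set V) (x : V) : ℚ :=
  (Nat.card ↥(M ∩ orbit (autSub Γ) x) : ℚ) / (Nat.card ↥(orbit (autSub Γ) x) : ℚ)

lemma dens_congr {V : Type} (Γ : SimpleGraph V) (M : Set V) {x y : V}
    (h : x ∈ orbit (autSub Γ) y) : dens Γ M x = dens Γ M y := by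
  obtain ⟨g, rfl⟩ := h
  simp [dens, orbit_smul]

lemma dens_nonneg {V : Type} (Γ : SimpleGraph V) (M : Set V) (x : V) :
    0 ≤ dens Γ M x := by
  unfold dens; positivity

/-- Decomposition of the cardinality of a set into orbit pieces. -/
lemma card_eq_sum_orbits {G α : Type} [Group G] [MulAction G α] [Fintype α]
    [Fintype (orbitRel.Quotient G α)] (S : Set α) :
    Nat.card ↥S = ∑ q : orbitRel.Quotient G α, Nat.card ↥(S ∩ q.orbit) := by
  classical
  rw [Nat.card_eq_fintype_card, ← Set.toFinset_card]
  have h1 : S.toFinset.card =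
      ∑ q : orbitRel.Quotient G α,
        (S.toFinset.filter (fun x => (Quotient.mk'' x : orbitRel.Quotient G α) = q)).card :=
    Finset.card_eq_sum_card_fiberwise (fun x _ => Finset.mem_univ _)
  rw [h1]
  refine Finset.sum_congr rfl fun q _ => ?_
  have h2 : S.toFinset.filter (fun x => (Quotient.mk'' x : orbitRel.Quotient G α) = q)
      = (S ∩ q.orbit).toFinset := by
    ext x
    simp only [Finset.mem_filter, Set.mem_toFinset, Set.mem_inter_iff,
      orbitRel.Quotient.mem_orbit]
  rw [h2, Set.toFinset_card, Nat.card_eq_fintype_card]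

/-- Key counting inequality: the densities along any copy of `K` sum to at least 1. -/
lemma lemA {W V : Type} [Fintype W] [Fintype V] (K : SimpleGraph W) (Γ : SimpleGraph V)
    (M : Set V) (hM : KCover K Γ M) (f : K →g Γ) (hf : Function.Injective f) :
    1 ≤ ∑ w : W, dens Γ M (f w) := by
  classical
  letI : Fintype ↥(autSub Γ) := Fintype.ofFinite _
  set G := ↥(autSub Γ)
  -- every automorphism moves the copy to a copy meeting M
  have step : ∀ g : G, ∃ w : W, g • f w ∈ M := by
    intro g
    obtain ⟨w, hw⟩ := hM ((autSub.toIso g).toHom.comp f)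
      ((autSub.toIso g).toEquiv.injective.comp hf)
    exact ⟨w, hw⟩
  have hsub : (Finset.univ : Finset G) ⊆
      Finset.univ.biUnion (fun w : W => Finset.univ.filter (fun g : G => g • f w ∈ M)) := by
    intro g _
    obtain ⟨w, hw⟩ := step g
    exact Finset.mem_biUnion.2 ⟨w, Finset.mem_univ _,
      Finset.mem_filter.2 ⟨Finset.mem_univ _, hw⟩⟩
  have hcount : Fintype.card G ≤
      ∑ w : W, (Finset.univ.filter (fun g : G => g • f w ∈ M)).card := by
    calc Fintype.card G = (Finset.univ : Finset G).card := rfl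
      _ ≤ _ := le_trans (Finset.card_le_card hsub) Finset.card_biUnion_le
  have horb : ∀ x : V, 0 < (Nat.card ↥(orbit G x) : ℚ) := by
    intro x
    have hne : Nonempty ↥(orbit G x) := ⟨⟨x, mem_orbit_self x⟩⟩
    have : 0 < Nat.card ↥(orbit G x) := Nat.card_pos
    exact_mod_cast this
  have hG : 0 < (Fintype.card G : ℚ) := by exact_mod_cast Fintype.card_pos
  have key : ∀ w : W,
      ((Finset.univ.filter (fun g : G => g • f w ∈ M)).card : ℚ)
        = dens Γ M (f w) * Fintype.card G := by
    intro w
    have h1 : (Finset.univ.filter (fun g : G => g • f w ∈ M)).card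
        = Nat.card {g : G // g • f w ∈ M} := by
      rw [Nat.card_eq_fintype_card, Fintype.card_subtype]
    have h2 := count_aux (G := G) M (f w)
    have h2' : (Nat.card {g : G // g • f w ∈ M} : ℚ) * Nat.card ↥(orbit G (f w))
        = Nat.card ↥(M ∩ orbit G (f w)) * Nat.card G := by exact_mod_cast h2
    have ho := horb (f w)
    rw [Nat.card_eq_fintype_card (α := G)] at h2'
    rw [h1, dens, div_mul_eq_mul_div, eq_div_iff (ne_of_gt ho)]
    exact h2'
  have hsum : (Fintype.card G : ℚ) ≤ (∑ w : W, dens Γ M (f w)) * Fintype.card G := by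
    calc (Fintype.card G : ℚ)
        ≤ ∑ w : W, ((Finset.univ.filter (fun g : G => g • f w ∈ M)).card : ℚ) := by
          exact_mod_cast hcount
      _ = ∑ w : W, dens Γ M (f w) * Fintype.card G := by
          exact Finset.sum_congr rfl fun w _ => key w
      _ = (∑ w : W, dens Γ M (f w)) * Fintype.card G := by rw [Finset.sum_mul]
  nlinarith [hsum, hG]

lemma dens_le {W V : Type} [Fintype W] [Fintype V] [Nonempty W]
    (K : SimpleGraph W) (Γ : SimpleGraph V)
    (h : upsilonSym K Γ = Fintype.card W * upsilon K Γ)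
    (M : Set V) (hM : KCover K Γ M) (hMcard : Nat.card M = upsilon K Γ) (x : V) :
    dens Γ M x ≤ 1 / (Fintype.card W : ℚ) := by
  classical
  by_contra hx
  push_neg at hx
  set n := Fintype.card W with hn
  have hn0 : 0 < (n : ℚ) := by exact_mod_cast Fintype.card_pos
  set G := ↥(autSub Γ) with hG
  set Y : Set V := {y | 1 / (n:ℚ) ≤ dens Γ M y} with hY
  -- Y is Aut-invariant
  have hgd : ∀ (g : Γ ≃g Γ) (z : V), dens Γ M (g z) = dens Γ M z := by
    intro g z
    exact dens_congr Γ M ⟨isoToAut g, rfl⟩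
  have hInv : AutInvariant Γ Y := by
    intro g
    ext y
    constructor
    · rintro ⟨z, hz, rfl⟩
      show 1/(n:ℚ) ≤ dens Γ M (g z)
      rw [hgd]; exact hz
    · intro hy
      refine ⟨g.symm y, ?_, g.apply_symm_apply y⟩
      show 1/(n:ℚ) ≤ dens Γ M (g.symm y)
      have h2 := hgd g (g.symm y)
      rw [g.apply_symm_apply] at h2
      rw [← h2]
      exact hy
  -- Y is a cover
  have hCov : KCover K Γ Y := by
    intro f hf
    by_contra hc
    push_neg at hc
    have hlt : ∀ w : W, dens Γ M (f w) < 1/(n:ℚ) := by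
      intro w
      have h3 := hc w
      rw [hY] at h3
      simpa [not_le] using h3
    have h1 := lemA K Γ M hM f hf
    have h2 : ∑ w : W, dens Γ M (f w) < ∑ _w : W, (1/(n:ℚ)) :=
      Finset.sum_lt_sum_of_nonempty Finset.univ_nonempty (fun w _ => hlt w)
    rw [Finset.sum_const, Finset.card_univ, nsmul_eq_mul] at h2
    have h4 : (n:ℚ) * (1/(n:ℚ)) = 1 := by field_simp
    rw [← hn] at h2
    linarith
  -- upsilonSym ≤ |Y|
  have hYle : upsilonSym K Γ ≤ Nat.card ↥Y :=
    Nat.sInf_le ⟨Y, Set.toFinite Y, rfl, hInv, hCov⟩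
  -- orbit decomposition
  letI : Fintype (orbitRel.Quotient G V) := Fintype.ofFinite _
  set Q := orbitRel.Quotient G V with hQ
  have hYsum := card_eq_sum_orbits (G := G) Y
  have hMsum := card_eq_sum_orbits (G := G) M
  -- pointwise bounds
  have hpt : ∀ q : Q, (Nat.card ↥(Y ∩ q.orbit) : ℚ) ≤ n * Nat.card ↥(M ∩ q.orbit) ∧
      (1/(n:ℚ) < dens Γ M (Quotient.out q) →
        (Nat.card ↥(Y ∩ q.orbit) : ℚ) < n * Nat.card ↥(M ∩ q.orbit)) := by
    intro q
    set r := Quotient.out q with hr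
    have hq : q.orbit = orbit G r := orbitRel.Quotient.orbit_eq_orbit_out q Quotient.out_eq'
    have hdc : ∀ z ∈ orbit G r, dens Γ M z = dens Γ M r := fun z hz => dens_congr Γ M hz
    have ho : 0 < (Nat.card ↥(orbit G r) : ℚ) := by
      have hne2 : Nonempty ↥(orbit G r) := ⟨⟨r, mem_orbit_self r⟩⟩
      exact_mod_cast Nat.card_pos
    by_cases hcase : 1/(n:ℚ) ≤ dens Γ M r
    · have hYq : Y ∩ q.orbit = q.orbit := by
        apply Set.inter_eq_right.mpr
        intro z hz
        rw [hq] at hz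
        show 1/(n:ℚ) ≤ dens Γ M z
        rw [hdc z hz]; exact hcase
      have hd : dens Γ M r
          = (Nat.card ↥(M ∩ orbit G r) : ℚ) / Nat.card ↥(orbit G r) := rfl
      rw [hYq, hq]
      constructor
      · rw [hd, div_le_div_iff₀ hn0 ho] at hcase
        nlinarith [hcase]
      · intro hlt
        rw [hd, div_lt_div_iff₀ hn0 ho] at hlt
        nlinarith [hlt]
    · have hYq : Y ∩ q.orbit = ∅ := by
        ext z
        simp only [Set.mem_inter_iff, Set.mem_empty_iff_false, iff_false, not_and]
        intro hzY hzO
        rw [hq] at hzO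
        exact hcase (by rw [← hdc z hzO]; exact hzY)
      rw [hYq]
      have hz : Nat.card ↥(∅ : Set V) = 0 := by simp
      rw [hz]
      constructor
      · push_cast; positivity
      · intro hlt
        exact absurd (le_of_lt hlt) hcase
  -- strictness witness
  set q0 : Q := Quotient.mk'' x with hq0
  have hdx : dens Γ M (Quotient.out q0) = dens Γ M x := by
    have hxo : x ∈ orbit G (Quotient.out q0) := by
      have h5 : (Quotient.mk'' (Quotient.out q0) : Q) = Quotient.mk'' x :=
        Quotient.out_eq' q0
      exact MulAction.orbitRel_apply.mp (Quotient.eq''.mp h5.symm)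
    exact (dens_congr Γ M hxo).symm
  have hstrict : (Nat.card ↥Y : ℚ) < n * Nat.card ↥M := by
    rw [hYsum, hMsum]
    push_cast
    calc ∑ q : Q, (Nat.card ↥(Y ∩ q.orbit) : ℚ)
        < ∑ q : Q, (n : ℚ) * (Nat.card ↥(M ∩ q.orbit) : ℚ) := by
          apply Finset.sum_lt_sum (fun q _ => (hpt q).1)
          exact ⟨q0, Finset.mem_univ _, (hpt q0).2 (by rw [hdx]; exact hx)⟩
      _ = (n:ℚ) * ∑ q : Q, (Nat.card ↥(M ∩ q.orbit) : ℚ) := (Finset.mul_sum _ _ _).symm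
  have hfinN : n * Nat.card ↥M ≤ Nat.card ↥Y := by
    rw [hMcard, ← h]
    exact hYle
  have hfinQ : (n:ℚ) * Nat.card ↥M ≤ (Nat.card ↥Y : ℚ) := by exact_mod_cast hfinN
  linarith

/-- Proposition 2.1: if `Υ_sym(K,Γ) = |V(K)|·Υ(K,Γ)` and `M` is a minimum-size cover,
then `|V ∩ M|/|V| = 1/|V(K)|` for every orbit `V` met by a copy of `K`, and
`|V ∩ M|/|V| = 0` for the remaining orbits. -/
theorem stmt8 {W V : Type} [Fintype W] [Fintype V]
    (K : SimpleGraph W) (Γ : SimpleGraph V)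
    (h : upsilonSym K Γ = Fintype.card W * upsilon K Γ)
    (M : Set V) (hM : KCover K Γ M) (hMcard : Nat.card M = upsilon K Γ) :
    ∀ v : V,
      ((∃ f : K →g Γ, Function.Injective f ∧ ∃ w : W, f w ∈ autOrbit Γ v) →
        (Nat.card ↥(autOrbit Γ v ∩ M) : ℚ) / Nat.card (autOrbit Γ v)
          = 1 / Fintype.card W) ∧
      ((¬ ∃ f : K →g Γ, Function.Injective f ∧ ∃ w : W, f w ∈ autOrbit Γ v) →
        (Nat.card ↥(autOrbit Γ v ∩ M) : ℚ) / Nat.card (autOrbit Γ v) = 0) := by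
  intro v
  constructor
  · rintro ⟨f, hf, w, hw⟩
    have hne : Nonempty W := ⟨w⟩
    classical
    have hle : ∀ x : V, dens Γ M x ≤ 1 / (Fintype.card W : ℚ) := dens_le K Γ h M hM hMcard
    have hsum := lemA K Γ M hM f hf
    have hn0 : 0 < ((Fintype.card W : ℕ) : ℚ) := by exact_mod_cast Fintype.card_pos
    have heq : dens Γ M (f w) = 1 / (Fintype.card W : ℚ) := by
      by_contra hne2
      have hlt : dens Γ M (f w) < 1 / (Fintype.card W : ℚ) := lt_of_le_of_ne (hle _) hne2
      have hstep : ∑ w' : W, dens Γ M (f w') < ∑ _w' : W, 1/(Fintype.card W : ℚ) := by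
        apply Finset.sum_lt_sum
        · exact fun i _ => hle (f i)
        · exact ⟨w, Finset.mem_univ _, hlt⟩
      rw [Finset.sum_const, Finset.card_univ, nsmul_eq_mul] at hstep
      have h1 : ((Fintype.card W : ℕ) : ℚ) * (1/(Fintype.card W:ℚ)) = 1 := by field_simp
      linarith
    rw [autOrbit_eq_orbit] at hw ⊢
    rw [Set.inter_comm]
    have hfin : dens Γ M v = 1/(Fintype.card W : ℚ) :=
      (dens_congr Γ M hw).symm.trans heq
    exact hfin
  · intro hno
    have hempty : autOrbit Γ v ∩ M = ∅ := by
      by_contra hne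
      obtain ⟨y, hyO, hyM⟩ := Set.nonempty_iff_ne_empty.mpr hne
      have hcov' : KCover K Γ (M \ autOrbit Γ v) := by
        intro f hf
        obtain ⟨w, hw⟩ := hM f hf
        exact ⟨w, hw, fun hmem => hno ⟨f, hf, w, hmem⟩⟩
      have hlt : Nat.card ↥(M \ autOrbit Γ v) < Nat.card ↥M := by
        rw [Nat.card_coe_set_eq, Nat.card_coe_set_eq]
        apply Set.ncard_lt_ncard
        · exact (Set.ssubset_iff_of_subset Set.diff_subset).mpr
            ⟨y, hyM, fun hd => hd.2 hyO⟩
        · exact Set.toFinite M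
      have hle2 : upsilon K Γ ≤ Nat.card ↥(M \ autOrbit Γ v) :=
        Nat.sInf_le ⟨_, Set.toFinite _, rfl, hcov'⟩
      omega
    rw [hempty]
    simp
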